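/- Let k be a field, let (L, K, M) be a field correspondence over k, let Ω be an algebraically closed field extension of k of transcendence degree 1, and fix a k-algebra embedding PQ : M → Ω with restrictions P = PQ|_L and Q = PQ|_K. Let G_gen be the connected component of the edge PQ in the full generic graph, and let E_{G_gen} ⊆ Ω be the subfield generated by the images of all vertices and edges of G_gen. Then: (a) E_{G_gen} is Galois over P(L) and Galois over Q(K); and (b) for every subfield F of Ω containing PQ(M) such that F is Galois over P(L) and Galois over Q(K), one has E_{G_gen} ⊆ F. Hence E_{G_gen} is the minimal subfield of Ω containing PQ(M) that is Galois over both P(L) and Q(K). -/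

import Mathlib

/-- A field extension `F/k` has transcendence degree one iff some single element
forms a transcendence basis of `F` over `k`. -/
def HasTrdegOne (k F : Type*) [Field k] [Field F] [Algebra k F] : Prop :=
  ∃ x : F, IsTranscendenceBasis k (fun _ : Unit => x)

/-- For subfields `B ≤ E` of `Ω`, the extension `E/B` is Galois (normal and separable,
possibly infinite). -/
def IsGaloisOver {k Ω : Type*} [Field k] [Field Ω] [Algebra k Ω]
    (B E : IntermediateField k Ω) : Prop :=
  ∃ h : B ≤ E, IsGalois B (IntermediateField.extendScalars h)

section GenericGraph

variable {k M : Type*} [Field k] [Field M] [Algebra k M]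
  (L K : IntermediateField k M)
  {Ω : Type*} [Field Ω] [Algebra k Ω]

/-- Two edges (that is, `k`-algebra homomorphisms `M → Ω`) of the full generic graph are
incident to a common vertex: they have the same restriction to `L` (a common blue vertex)
or the same restriction to `K` (a common red vertex). -/
def EdgeStep (e e' : M →ₐ[k] Ω) : Prop :=
  e.comp L.val = e'.comp L.val ∨ e.comp K.val = e'.comp K.val

/-- The edge `e` lies in the connected component `G_gen` of the distinguished edge `PQ`
of the full generic graph. -/
def InGenericComponent (PQ e : M →ₐ[k] Ω) : Prop :=
  Relation.ReflTransGen (EdgeStep L K) PQ e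

/-- The subfield `E_{G_gen}` of `Ω` generated by the images of all vertices and edges of
the connected component `G_gen` of `PQ` (the image of each vertex is contained in the
image of any edge incident to it, so it is the compositum of the images `e(M)` over all
edges `e` of `G_gen`, together with the images of its vertices). -/
noncomputable def componentField (PQ : M →ₐ[k] Ω) : IntermediateField k Ω :=
  (⨆ e : {e : M →ₐ[k] Ω // InGenericComponent L K PQ e}, (e.1).fieldRange) ⊔
  (⨆ e : {e : M →ₐ[k] Ω // InGenericComponent L K PQ e}, ((e.1).comp L.val).fieldRange) ⊔
  (⨆ e : {e : M →ₐ[k] Ω // InGenericComponent L K PQ e}, ((e.1).comp K.val).fieldRange)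

end GenericGraph

open IntermediateField Polynomial

section Aux

variable {Ω : Type*} [Field Ω]

/-- Transport separability of an element along compatible ring homs. -/
lemma aux_isSeparable_push {A N T : Type*} [Field A] [Field N] [Algebra A N]
    [Field T] [Algebra T Ω]
    (g : N →+* Ω) (φ : A →+* T)
    (hcomp : ∀ a : A, algebraMap T Ω (φ a) = g (algebraMap A N a))
    {m : N} (hm : IsSeparable A m) : IsSeparable T (g m) := by
  have h0 : Polynomial.aeval (g m) ((minpoly A m).map φ) = 0 := by
    rw [Polynomial.aeval_def, Polynomial.eval₂_map,
      show (algebraMap T Ω).comp φ = g.comp (algebraMap A N) from RingHom.ext hcomp,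
      ← Polynomial.hom_eval₂]
    have h1 := minpoly.aeval A m
    rw [Polynomial.aeval_def] at h1
    rw [h1, map_zero]
  exact (Polynomial.Separable.map (f := φ) hm).of_dvd (minpoly.dvd T (g m) h0)

lemma aux_isAlgebraic_transport {S T : Type*} [CommRing S] [CommRing T] [Algebra S Ω] [Algebra T Ω]
    (φ : S →+* T) (hSinj : Function.Injective (algebraMap S Ω))
    (hφ : ∀ s, algebraMap T Ω (φ s) = algebraMap S Ω s)
    {z : Ω} (hz : IsAlgebraic S z) : IsAlgebraic T z := by
  have hinj : Function.Injective φ := fun a b hab => hSinj (by rw [← hφ a, ← hφ b, hab])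
  obtain ⟨p, hp0, hpz⟩ := hz
  refine ⟨p.map φ, fun h => hp0 (Polynomial.map_injective φ hinj
    (h.trans (Polynomial.map_zero φ).symm)), ?_⟩
  rw [Polynomial.aeval_def, Polynomial.eval₂_map,
    show (algebraMap T Ω).comp φ = algebraMap S Ω from RingHom.ext hφ, ← Polynomial.aeval_def]
  exact hpz

lemma aux_transcendental_map {k A B : Type*} [Field k] [Field A] [Field B]
    [Algebra k A] [Algebra k B] (f : A →ₐ[k] B) {a : A} (ha : Transcendental k a) :
    Transcendental k (f a) := by
  intro h
  obtain ⟨p, hp0, hpz⟩ := h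
  refine ha ⟨p, hp0, ?_⟩
  rw [Polynomial.aeval_algHom_apply] at hpz
  exact f.toRingHom.injective (hpz.trans (map_zero f).symm)

lemma aux_isAlgebraic_of_transcendental_mem {k Ω : Type*} [Field k] [Field Ω] [Algebra k Ω]
    (htrΩ : HasTrdegOne k Ω) (F : IntermediateField k Ω) {y : Ω}
    (hy : Transcendental k y) (hyF : y ∈ F) : Algebra.IsAlgebraic F Ω := by
  obtain ⟨x, hx⟩ := htrΩ
  have hxy : IsAlgebraic (Algebra.adjoin k ({y} : Set Ω)) x := by
    by_contra hxx
    have h1 : AlgebraicIndependent k (fun _ : Unit => y) :=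
      algebraicIndependent_unique_type_iff.mpr hy
    have h2 : AlgebraicIndependent k (fun o : Option Unit => o.elim x fun _ => y) := by
      refine (h1.option_iff_transcendental x).mpr ?_
      rwa [Set.range_const]
    have h3 := hx.2 (Set.range fun o : Option Unit => o.elim x fun _ => y)
      ((algebraicIndependent_subtype_range h2.injective).2 h2)
      (by rintro _ ⟨u, rfl⟩; exact ⟨none, rfl⟩)
    have hy_mem : y ∈ Set.range (fun _ : Unit => x) := by
      rw [h3]; exact ⟨some (), rfl⟩
    obtain ⟨u, hu⟩ := hy_mem
    apply hxx
    rw [show x = y from hu]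
    exact isAlgebraic_algebraMap
      (⟨y, Algebra.self_mem_adjoin_singleton k y⟩ : Algebra.adjoin k ({y} : Set Ω))
  have hle : Algebra.adjoin k ({y} : Set Ω) ≤ F.toSubalgebra :=
    Algebra.adjoin_le (Set.singleton_subset_iff.mpr hyF)
  have hxF : IsAlgebraic (↥F) x := by
    refine aux_isAlgebraic_transport (Ω := Ω)
      (RingHom.codRestrict (algebraMap (Algebra.adjoin k ({y} : Set Ω)) Ω) F
        (fun a => hle a.2)) (fun a b h => by exact Subtype.ext h)
      (fun s => rfl) hxy
  have hxInt : IsIntegral (↥F) x := hxF.isIntegral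
  let F' : IntermediateField (↥F) Ω := IntermediateField.adjoin (↥F) {x}
  haveI : FiniteDimensional (↥F) F' := IntermediateField.adjoin.finiteDimensional hxInt
  haveI : Algebra.IsIntegral (↥F) F' := Algebra.IsIntegral.of_finite _ _
  constructor
  intro z
  have hz0 : IsAlgebraic ↥(IntermediateField.adjoin k (Set.range fun _ : Unit => x)) z :=
    hx.isAlgebraic_field.isAlgebraic z
  have hle2 : IntermediateField.adjoin k (Set.range fun _ : Unit => x) ≤
      F'.restrictScalars k := by
    rw [IntermediateField.adjoin_le_iff]
    rintro _ ⟨u, rfl⟩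
    exact (IntermediateField.mem_restrictScalars k).mpr (IntermediateField.subset_adjoin _ _ rfl)
  have hz1 : IsAlgebraic (↥F') z := by
    refine aux_isAlgebraic_transport (Ω := Ω)
      (RingHom.codRestrict
        (algebraMap (↥(IntermediateField.adjoin k (Set.range fun _ : Unit => x))) Ω) F'
        (fun a => (IntermediateField.mem_restrictScalars k).mp (hle2 a.2)))
      (fun a b h => by exact Subtype.ext h)
      (fun s => rfl) hz0
  exact (isIntegral_trans z hz1.isIntegral).isAlgebraic

end Aux

section Aux2

lemma aux_exists_equiv {k M Ω : Type*} [Field k] [Field M] [Algebra k M]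
    [Field Ω] [Algebra k Ω] [IsAlgClosed Ω] (htrΩ : HasTrdegOne k Ω)
    {t : M} (ht : Transcendental k t)
    (e e' : M →ₐ[k] Ω) (V : IntermediateField k M)
    (hagree : e.comp V.val = e'.comp V.val) :
    ∃ ρ : Ω ≃ₐ[k] Ω, ((ρ : Ω →ₐ[k] Ω).comp e = e') ∧
      ∀ x ∈ (e.comp V.val).fieldRange, ρ x = x := by
  have het : Transcendental k (e t) := aux_transcendental_map e ht
  have he't : Transcendental k (e' t) := aux_transcendental_map e' ht
  haveI hRalg : Algebra.IsAlgebraic (↥e.fieldRange) Ω :=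
    aux_isAlgebraic_of_transcendental_mem htrΩ e.fieldRange het ⟨t, rfl⟩
  let ε : M ≃ₐ[k] ↥e.fieldRange := AlgEquiv.ofInjectiveField e
  let κ : ↥e.fieldRange →ₐ[k] Ω := e'.comp (ε.symm : ↥e.fieldRange →ₐ[k] M)
  obtain ⟨ψ, hψ⟩ := IsAlgClosed.surjective_restrictDomain_of_isAlgebraic
      (K := k) (L := ↥e.fieldRange) (E := Ω) (M := Ω) κ
  have hψR : ∀ r : ↥e.fieldRange, ψ (r : Ω) = κ r := fun r => AlgHom.congr_fun hψ r
  have hψe : ψ.comp e = e' := by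
    ext m
    have h1 : ψ ((ε m : Ω)) = κ (ε m) := hψR (ε m)
    have h2 : ((ε m : Ω)) = e m := rfl
    have h3 : κ (ε m) = e' (ε.symm (ε m)) := rfl
    rw [AlgHom.comp_apply, ← h2, h1, h3, AlgEquiv.symm_apply_apply]
  have hfix : ∀ x ∈ (e.comp V.val).fieldRange, ψ x = x := by
    rintro _ ⟨v, rfl⟩
    have h3 : ψ (e (V.val v)) = e' (V.val v) := AlgHom.congr_fun hψe (V.val v)
    have h4 : e' (V.val v) = e (V.val v) := (AlgHom.congr_fun hagree v).symm
    exact h3.trans h4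
  have hinj : Function.Injective ψ := ψ.toRingHom.injective
  have hsurj : Function.Surjective ψ := by
    haveI hTclosed : IsAlgClosed ↥ψ.fieldRange :=
      IsAlgClosed.of_ringEquiv Ω ↥ψ.fieldRange (AlgEquiv.ofInjectiveField ψ).toRingEquiv
    haveI hTalg : Algebra.IsAlgebraic (↥ψ.fieldRange) Ω := by
      refine aux_isAlgebraic_of_transcendental_mem htrΩ ψ.fieldRange he't ?_
      exact ⟨e t, AlgHom.congr_fun hψe t⟩
    haveI : Algebra.IsIntegral (↥ψ.fieldRange) Ω := Algebra.isAlgebraic_iff_isIntegral.mp hTalg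
    intro z
    obtain ⟨w, hw⟩ := (IsAlgClosed.algebraMap_bijective_of_isIntegral
      (k := ↥ψ.fieldRange) (K := Ω)).2 z
    obtain ⟨u, hu⟩ := w.2
    exact ⟨u, by rw [show ψ u = (w : Ω) from hu]; exact hw⟩
  refine ⟨AlgEquiv.ofBijective ψ ⟨hinj, hsurj⟩, by ext m; exact AlgHom.congr_fun hψe m, ?_⟩
  exact fun x hx => hfix x hx

lemma aux_fix_map {k Ω : Type*} [Field k] [Field Ω] [Algebra k Ω]
    (B F : IntermediateField k Ω) (hB : B ≤ F) [Normal (↥B) Ω]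
    (hGal : Normal (↥B) ↥(IntermediateField.extendScalars hB))
    (σ : Ω ≃ₐ[k] Ω) (hσ : ∀ x ∈ B, σ x = x) :
    F.map (σ : Ω →ₐ[k] Ω) = F := by
  let τ : Ω ≃ₐ[↥B] Ω :=
    { σ.toRingEquiv with commutes' := fun r => hσ r.1 r.2 }
  have h := IntermediateField.normal_iff_forall_map_eq'.mp hGal τ
  apply SetLike.ext
  intro x
  constructor
  · intro hx
    obtain ⟨y, hy, rfl⟩ := hx
    have h5 : (τ : Ω →ₐ[↥B] Ω) y ∈
        (IntermediateField.extendScalars hB).map (τ : Ω →ₐ[↥B] Ω) := ⟨y, hy, rfl⟩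
    rw [h] at h5
    exact h5
  · intro hx
    have h6 : x ∈ (IntermediateField.extendScalars hB).map (τ : Ω →ₐ[↥B] Ω) := h.symm ▸ hx
    obtain ⟨y, hy, hyx⟩ := h6
    exact ⟨y, hy, hyx⟩

lemma componentField_comm {k M : Type*} [Field k] [Field M] [Algebra k M]
    (L K : IntermediateField k M) {Ω : Type*} [Field Ω] [Algebra k Ω] (PQ : M →ₐ[k] Ω) :
    componentField K L PQ = componentField L K PQ := by
  have h1 : InGenericComponent (Ω := Ω) K L PQ = InGenericComponent L K PQ := by
    have h0 : EdgeStep (Ω := Ω) (M := M) K L = EdgeStep L K := by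
      funext e e'
      exact propext or_comm
    unfold InGenericComponent
    rw [h0]
  unfold componentField
  rw [h1, sup_right_comm]

end Aux2

theorem aux_galois {k M : Type*} [Field k] [Field M] [Algebra k M]
    (htr : HasTrdegOne k M)
    (L K : IntermediateField k M)
    [FiniteDimensional ↥L M]
    [Algebra.IsSeparable ↥L M] [Algebra.IsSeparable ↥K M]
    {Ω : Type*} [Field Ω] [Algebra k Ω] [IsAlgClosed Ω]
    (htrΩ : HasTrdegOne k Ω)
    (PQ : M →ₐ[k] Ω) :
    IsGaloisOver (PQ.comp L.val).fieldRange (componentField L K PQ) := by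
  obtain ⟨t, htb⟩ := htr
  have ht : Transcendental k t := htb.1.transcendental default
  have hnotalg : ¬ Algebra.IsAlgebraic k ↥L := by
    intro h
    haveI := h
    haveI : Algebra.IsAlgebraic (↥L) M := Algebra.IsAlgebraic.of_finite ↥L M
    have : Algebra.IsAlgebraic k M := Algebra.IsAlgebraic.trans (R := k) (S := ↥L) (A := M)
    exact ht (this.isAlgebraic t)
  have hexl : ∃ l : ↥L, Transcendental k l := by
    by_contra hc
    push_neg at hc
    exact hnotalg ⟨fun l => not_not.mp (hc l)⟩
  obtain ⟨l, hl⟩ := hexl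
  have hlB : Transcendental k ((PQ.comp L.val) l) := aux_transcendental_map (PQ.comp L.val) hl
  have halgBL : Algebra.IsAlgebraic (↥(PQ.comp L.val).fieldRange) Ω :=
    aux_isAlgebraic_of_transcendental_mem htrΩ _ hlB ⟨l, rfl⟩
  haveI hNorm : Normal (↥(PQ.comp L.val).fieldRange) Ω :=
    { toIsAlgebraic := halgBL
      splits' := fun x => IsAlgClosed.splits _ }
  have hPQmem : InGenericComponent L K PQ PQ := Relation.ReflTransGen.refl
  have hBLE : (PQ.comp L.val).fieldRange ≤ componentField L K PQ :=
    le_trans (le_trans (le_iSup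
      (fun e : {e : M →ₐ[k] Ω // InGenericComponent L K PQ e} => ((e.1).comp L.val).fieldRange)
      ⟨PQ, hPQmem⟩) le_sup_right) le_sup_left
  have hstep : ∀ (σ' : Ω →ₐ[k] Ω), (∀ x ∈ (PQ.comp L.val).fieldRange, σ' x = x) →
      ∀ e, InGenericComponent L K PQ e → InGenericComponent L K PQ (σ'.comp e) := by
    intro σ' hσ' e he
    induction he with
    | refl =>
      refine Relation.ReflTransGen.single (Or.inl ?_)
      ext lv
      exact (hσ' _ ⟨lv, rfl⟩).symm
    | tail hab hbc ih =>
      refine ih.tail ?_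
      rcases hbc with h | h
      · exact Or.inl (by rw [AlgHom.comp_assoc, AlgHom.comp_assoc, h])
      · exact Or.inr (by rw [AlgHom.comp_assoc, AlgHom.comp_assoc, h])
  have hmap : ∀ (σ' : Ω →ₐ[k] Ω), (∀ x ∈ (PQ.comp L.val).fieldRange, σ' x = x) →
      (componentField L K PQ).map σ' ≤ componentField L K PQ := by
    intro σ' hσ'
    unfold componentField
    rw [IntermediateField.map_sup, IntermediateField.map_sup,
      IntermediateField.map_iSup, IntermediateField.map_iSup, IntermediateField.map_iSup]
    refine sup_le (sup_le (iSup_le fun e => ?_) (iSup_le fun e => ?_)) (iSup_le fun e => ?_)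
    · rw [AlgHom.map_fieldRange]
      exact le_trans (le_iSup (fun e : {e : M →ₐ[k] Ω // InGenericComponent L K PQ e} =>
        (e.1).fieldRange) ⟨σ'.comp e.1, hstep σ' hσ' e.1 e.2⟩)
        (le_sup_left.trans le_sup_left)
    · rw [AlgHom.map_fieldRange, ← AlgHom.comp_assoc]
      exact le_trans (le_iSup (fun e : {e : M →ₐ[k] Ω // InGenericComponent L K PQ e} =>
        ((e.1).comp L.val).fieldRange) ⟨σ'.comp e.1, hstep σ' hσ' e.1 e.2⟩)
        (le_sup_right.trans le_sup_left)
    · rw [AlgHom.map_fieldRange, ← AlgHom.comp_assoc]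
      exact le_trans (le_iSup (fun e : {e : M →ₐ[k] Ω // InGenericComponent L K PQ e} =>
        ((e.1).comp K.val).fieldRange) ⟨σ'.comp e.1, hstep σ' hσ' e.1 e.2⟩) le_sup_right
  have hNormal : Normal (↥(PQ.comp L.val).fieldRange)
      ↥(IntermediateField.extendScalars hBLE) := by
    rw [IntermediateField.normal_iff_forall_map_le]
    rintro σ _ ⟨y, hy, rfl⟩
    exact hmap (σ.restrictScalars k) (fun z hz => σ.commutes ⟨z, hz⟩) ⟨y, hy, rfl⟩
  have hsepStep : ∀ (N : IntermediateField k M), Algebra.IsSeparable (↥N) M →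
      ∀ (e : M →ₐ[k] Ω),
      (∀ x ∈ (e.comp N.val).fieldRange, x ∈ separableClosure (↥(PQ.comp L.val).fieldRange) Ω) →
      ∀ m : M, e m ∈ separableClosure (↥(PQ.comp L.val).fieldRange) Ω := by
    intro N hNsep e hV m
    haveI := hNsep
    have h1 : IsSeparable (↥(e.comp N.val).fieldRange) (e m) := by
      refine aux_isSeparable_push (Ω := Ω) (e : M →+* Ω)
        (RingHom.codRestrict ((e.comp N.val) : ↥N →+* Ω) (e.comp N.val).fieldRange
          (fun a => ⟨a, rfl⟩))
        (fun a => rfl) (Algebra.IsSeparable.isSeparable (↥N) m)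
    have h2 : IsSeparable (↥(separableClosure (↥(PQ.comp L.val).fieldRange) Ω)) (e m) := by
      refine aux_isSeparable_push (Ω := Ω) (RingHom.id Ω)
        (RingHom.codRestrict (algebraMap (↥(e.comp N.val).fieldRange) Ω)
          (separableClosure (↥(PQ.comp L.val).fieldRange) Ω) (fun a => hV a.1 a.2))
        (fun a => rfl) h1
    exact mem_separableClosure_iff.mpr
      (IsSeparable.of_algebra_isSeparable_of_isSeparable (↥(PQ.comp L.val).fieldRange) h2)
  have hsepAll : ∀ e, InGenericComponent L K PQ e → ∀ m : M,
      e m ∈ separableClosure (↥(PQ.comp L.val).fieldRange) Ω := by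
    intro e he
    induction he with
    | refl =>
      refine hsepStep L inferInstance PQ ?_ 
      rintro _ ⟨lv, rfl⟩
      rw [mem_separableClosure_iff]
      show (minpoly (↥(PQ.comp L.val).fieldRange) ((PQ.comp L.val) lv)).Separable
      have hmem : (PQ.comp L.val) lv ∈ (PQ.comp L.val).fieldRange := ⟨lv, rfl⟩
      rw [show minpoly (↥(PQ.comp L.val).fieldRange) ((PQ.comp L.val) lv) =
          Polynomial.X - Polynomial.C ⟨(PQ.comp L.val) lv, hmem⟩ from
        minpoly.eq_X_sub_C Ω (⟨(PQ.comp L.val) lv, hmem⟩ : ↥(PQ.comp L.val).fieldRange)]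
      exact Polynomial.separable_X_sub_C
    | tail hab hbc ih =>
      rcases hbc with h | h
      · refine hsepStep L inferInstance _ ?_
        rintro _ ⟨lv, rfl⟩
        rw [← h]
        exact ih _
      · refine hsepStep K inferInstance _ ?_
        rintro _ ⟨kv, rfl⟩
        rw [← h]
        exact ih _
  have hE_le : componentField L K PQ ≤
      (separableClosure (↥(PQ.comp L.val).fieldRange) Ω).restrictScalars k := by
    unfold componentField
    refine sup_le (sup_le (iSup_le fun e => ?_) (iSup_le fun e => ?_)) (iSup_le fun e => ?_)
    · rintro _ ⟨m, rfl⟩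
      exact hsepAll e.1 e.2 m
    · rintro _ ⟨lv, rfl⟩
      exact hsepAll e.1 e.2 _
    · rintro _ ⟨kv, rfl⟩
      exact hsepAll e.1 e.2 _
  haveI hsepE : Algebra.IsSeparable (↥(PQ.comp L.val).fieldRange)
      ↥(IntermediateField.extendScalars hBLE) := by
    refine (le_separableClosure_iff _ Ω _).mp ?_
    intro x hx
    exact hE_le hx
  haveI := hNormal
  exact ⟨hBLE, ⟨⟩⟩

lemma aux_normal_omega {k M Ω : Type*} [Field k] [Field M] [Algebra k M]
    [Field Ω] [Algebra k Ω] [IsAlgClosed Ω]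
    (htrΩ : HasTrdegOne k Ω) {t : M} (ht : Transcendental k t)
    (N : IntermediateField k M) [FiniteDimensional ↥N M]
    (e : M →ₐ[k] Ω) : Normal (↥(e.comp N.val).fieldRange) Ω := by
  have hnotalg : ¬ Algebra.IsAlgebraic k ↥N := by
    intro h
    haveI := h
    haveI : Algebra.IsAlgebraic (↥N) M := Algebra.IsAlgebraic.of_finite ↥N M
    have : Algebra.IsAlgebraic k M := Algebra.IsAlgebraic.trans (R := k) (S := ↥N) (A := M)
    exact ht (this.isAlgebraic t)
  have hexl : ∃ l : ↥N, Transcendental k l := by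
    by_contra hc
    push_neg at hc
    exact hnotalg ⟨fun l => not_not.mp (hc l)⟩
  obtain ⟨l, hl⟩ := hexl
  have hlB : Transcendental k ((e.comp N.val) l) := aux_transcendental_map (e.comp N.val) hl
  have halg : Algebra.IsAlgebraic (↥(e.comp N.val).fieldRange) Ω :=
    aux_isAlgebraic_of_transcendental_mem htrΩ _ hlB ⟨l, rfl⟩
  exact { toIsAlgebraic := halg
          splits' := fun x => IsAlgClosed.splits _ }

/-- Corollary `E_infty_in_E_gen`, Lemma `E_G_in_biGalois_extension`,
Corollary 5.6. The subfield `E_{G_gen}` of `Ω` generated by the images of all vertices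
and edges of the connected component `G_gen` of the distinguished edge `PQ` is Galois
over `P(L)` and over `Q(K)`, and is contained in every subfield `F ⊆ Ω` containing
`PQ(M)` which is Galois over both `P(L)` and `Q(K)`: it is the minimal such subfield. -/
theorem componentField_minimal_biGalois
    (k M : Type*) [Field k] [Field M] [Algebra k M]
    -- `M` is a finitely generated field extension of `k` of transcendence degree 1
    (hfg : (⊤ : IntermediateField k M).FG)
    (htr : HasTrdegOne k M)
    -- the two intermediate fields `L` and `K`, with `M/L` and `M/K` finite and separable
    (L K : IntermediateField k M)
    [FiniteDimensional L M] [FiniteDimensional K M]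
    [Algebra.IsSeparable L M] [Algebra.IsSeparable K M]
    -- an algebraically closed extension `Ω` of `k` of transcendence degree 1
    (Ω : Type*) [Field Ω] [Algebra k Ω] [IsAlgClosed Ω]
    (htrΩ : HasTrdegOne k Ω)
    -- a fixed `k`-algebra embedding `PQ : M → Ω`
    (PQ : M →ₐ[k] Ω) :
    IsGaloisOver (PQ.comp L.val).fieldRange (componentField L K PQ) ∧
    IsGaloisOver (PQ.comp K.val).fieldRange (componentField L K PQ) ∧
    ∀ F : IntermediateField k Ω, PQ.fieldRange ≤ F →
      IsGaloisOver (PQ.comp L.val).fieldRange F →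
      IsGaloisOver (PQ.comp K.val).fieldRange F →
      componentField L K PQ ≤ F := by
  refine ⟨aux_galois htr L K htrΩ PQ, ?_, ?_⟩
  · rw [← componentField_comm L K PQ]
    exact aux_galois htr K L htrΩ PQ
  intro F hF hGL hGK
  obtain ⟨hFL, hGalL⟩ := hGL
  obtain ⟨hFK, hGalK⟩ := hGK
  obtain ⟨t, htb⟩ := htr
  have ht : Transcendental k t := htb.1.transcendental default
  haveI hNL : Normal (↥(PQ.comp L.val).fieldRange) Ω := aux_normal_omega htrΩ ht L PQ
  haveI hNK : Normal (↥(PQ.comp K.val).fieldRange) Ω := aux_normal_omega htrΩ ht K PQ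
  set AA : Set (Ω ≃ₐ[k] Ω) :=
    {σ | ∀ x ∈ (PQ.comp L.val).fieldRange, σ x = x} ∪
    {σ | ∀ x ∈ (PQ.comp K.val).fieldRange, σ x = x} with hAA
  have hM1 : ∀ σ ∈ Subgroup.closure AA, F.map (σ : Ω →ₐ[k] Ω) = F := by
    intro σ hσ
    refine Subgroup.closure_induction (p := fun (g : Ω ≃ₐ[k] Ω) (_ : g ∈ Subgroup.closure AA) => F.map (g : Ω →ₐ[k] Ω) = F)
      ?_ ?_ ?_ ?_ hσ
    · rintro σ' (h | h)
      · exact aux_fix_map _ F hFL hGalL.to_normal σ' h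
      · exact aux_fix_map _ F hFK hGalK.to_normal σ' h
    · apply SetLike.ext; intro x
      constructor
      · rintro ⟨y, hy, rfl⟩; exact hy
      · intro hx; exact ⟨x, hx, rfl⟩
    · intro a b _ _ ha hb
      have hab : ((a * b : Ω ≃ₐ[k] Ω) : Ω →ₐ[k] Ω) = (a : Ω →ₐ[k] Ω).comp (b : Ω →ₐ[k] Ω) := by
        ext z; rfl
      rw [hab, ← IntermediateField.map_map, hb, ha]
    · intro a _ ha
      have h2 : (F.map (a : Ω →ₐ[k] Ω)).map ((a⁻¹ : Ω ≃ₐ[k] Ω) : Ω →ₐ[k] Ω) = F := by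
        rw [IntermediateField.map_map]
        have h3 : ((a⁻¹ : Ω ≃ₐ[k] Ω) : Ω →ₐ[k] Ω).comp (a : Ω →ₐ[k] Ω) = AlgHom.id k Ω := by
          ext z
          show (a⁻¹ : Ω ≃ₐ[k] Ω) (a z) = z
          exact a.symm_apply_apply z
        rw [h3]
        apply SetLike.ext; intro x
        constructor
        · rintro ⟨y, hy, rfl⟩; exact hy
        · intro hx; exact ⟨x, hx, rfl⟩
      rw [ha] at h2
      exact h2
  have hM2 : ∀ e, InGenericComponent L K PQ e → ∃ σ : Ω ≃ₐ[k] Ω,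
      σ ∈ Subgroup.closure AA ∧ (σ : Ω →ₐ[k] Ω).comp PQ = e := by
    intro e he
    induction he with
    | refl => exact ⟨1, one_mem _, by ext m; rfl⟩
    | @tail b c hab hbc ih =>
      obtain ⟨σ, hσG, hσ⟩ := ih
      rcases hbc with h | h
      · obtain ⟨ρ, hρcomp, hρfix⟩ := aux_exists_equiv htrΩ ht b c L h
        have hconj : σ⁻¹ * ρ * σ ∈ AA := by
          apply Set.mem_union_left
          intro x hx
          obtain ⟨lz, hlz⟩ := hx
          have h1 : σ x ∈ (b.comp L.val).fieldRange := by
            refine ⟨lz, ?_⟩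
            show b (L.val lz) = σ x
            rw [← hlz]
            exact (AlgHom.congr_fun hσ (L.val lz)).symm
          have h2 : ρ (σ x) = σ x := hρfix _ h1
          show σ⁻¹ (ρ (σ x)) = x
          rw [h2]
          exact σ.symm_apply_apply x
        have hρG : ρ ∈ Subgroup.closure AA := by
          have hmem : σ⁻¹ * ρ * σ ∈ Subgroup.closure AA := Subgroup.subset_closure hconj
          have hexp : ρ = σ * (σ⁻¹ * ρ * σ) * σ⁻¹ := by group
          rw [hexp]
          exact mul_mem (mul_mem hσG hmem) (inv_mem hσG)
        refine ⟨ρ * σ, mul_mem hρG hσG, ?_⟩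
        ext m
        show ρ (σ (PQ m)) = c m
        rw [show σ (PQ m) = b m from AlgHom.congr_fun hσ m]
        exact AlgHom.congr_fun hρcomp m
      · obtain ⟨ρ, hρcomp, hρfix⟩ := aux_exists_equiv htrΩ ht b c K h
        have hconj : σ⁻¹ * ρ * σ ∈ AA := by
          apply Set.mem_union_right
          intro x hx
          obtain ⟨kz, hkz⟩ := hx
          have h1 : σ x ∈ (b.comp K.val).fieldRange := by
            refine ⟨kz, ?_⟩
            show b (K.val kz) = σ x
            rw [← hkz]
            exact (AlgHom.congr_fun hσ (K.val kz)).symm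
          have h2 : ρ (σ x) = σ x := hρfix _ h1
          show σ⁻¹ (ρ (σ x)) = x
          rw [h2]
          exact σ.symm_apply_apply x
        have hρG : ρ ∈ Subgroup.closure AA := by
          have hmem : σ⁻¹ * ρ * σ ∈ Subgroup.closure AA := Subgroup.subset_closure hconj
          have hexp : ρ = σ * (σ⁻¹ * ρ * σ) * σ⁻¹ := by group
          rw [hexp]
          exact mul_mem (mul_mem hσG hmem) (inv_mem hσG)
        refine ⟨ρ * σ, mul_mem hρG hσG, ?_⟩
        ext m
        show ρ (σ (PQ m)) = c m
        rw [show σ (PQ m) = b m from AlgHom.congr_fun hσ m]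
        exact AlgHom.congr_fun hρcomp m
  have hEF : ∀ e, InGenericComponent L K PQ e → e.fieldRange ≤ F := by
    intro e he
    obtain ⟨σ, hσG, hσ⟩ := hM2 e he
    rintro _ ⟨m, rfl⟩
    have h1 : PQ m ∈ F := hF ⟨m, rfl⟩
    have h2 : σ (PQ m) ∈ F.map (σ : Ω →ₐ[k] Ω) := ⟨PQ m, h1, rfl⟩
    rw [hM1 σ hσG] at h2
    exact AlgHom.congr_fun hσ m ▸ h2
  unfold componentField
  refine sup_le (sup_le (iSup_le fun e => ?_) (iSup_le fun e => ?_)) (iSup_le fun e => ?_)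
  · exact hEF e.1 e.2
  · rintro _ ⟨lv, rfl⟩
    exact hEF e.1 e.2 ⟨L.val lv, rfl⟩
  · rintro _ ⟨kv, rfl⟩
    exact hEF e.1 e.2 ⟨K.val kv, rfl⟩
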